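/- For any finite tree T, ∂_s(T) ≤ ⌊(n(T) + 3·∂(T))/4⌋, i.e., 4·∂_s(T) ≤ n(T) + 3·∂(T). -/

import Mathlib

open Finset

namespace StrongDifferential

variable {V : Type*} [Fintype V] [DecidableEq V] (G : SimpleGraph V) [DecidableRel G.Adj]

/-- The external neighbourhood `N_e(D)` of a set `D`: vertices outside `D`
with a neighbour in `D`. -/
def extNbhd (D : Finset V) : Finset V :=
  univ.filter fun u => u ∉ D ∧ ∃ v ∈ D, G.Adj u v

/-- The external private neighbourhood `epn(v, D)` of `v` with respect to `D`. -/
def epn (v : V) (D : Finset V) : Finset V :=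
  univ.filter fun u => u ∉ D ∧ G.neighborFinset u ∩ D = {v}

/-- `D_w`: the vertices of `D` having a nonempty external private neighbourhood. -/
def weak (D : Finset V) : Finset V :=
  D.filter fun v => (epn G v D).Nonempty

/-- `D_s = D \ D_w`. -/
def strong (D : Finset V) : Finset V :=
  D \ weak G D

/-- The strong differential `∂ₛ(D) = |N_e(D)| - |D_w|` of a set `D`. -/
def sdiffSet (D : Finset V) : ℤ :=
  (extNbhd G D).card - (weak G D).card

/-- The strong differential `∂ₛ(G) = max {∂ₛ(D) : D ⊆ V(G)}` of the graph `G`. -/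
def sdiff : ℤ :=
  (univ : Finset V).powerset.sup' ⟨∅, empty_mem_powerset _⟩ (sdiffSet G)

/-- The differential `∂(D) = |N_e(D)| - |D|` of a set `D`. -/
def diffSet (D : Finset V) : ℤ :=
  (extNbhd G D).card - D.card

/-- The differential `∂(G) = max {∂(D) : D ⊆ V(G)}` of the graph `G`. -/
def gdiff : ℤ :=
  (univ : Finset V).powerset.sup' ⟨∅, empty_mem_powerset _⟩ (diffSet G)

/-- A dominating set: every vertex outside `D` has a neighbour in `D`. -/
def IsDomSet (D : Finset V) : Prop :=
  ∀ v, v ∉ D → ∃ u ∈ D, G.Adj v u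

/-- The domination number `γ(G)`. -/
noncomputable def gamma : ℕ :=
  sInf {k | ∃ D : Finset V, IsDomSet G D ∧ D.card = k}

/-- A 2-dominating set: every vertex outside `D` has at least two neighbours in `D`. -/
def Is2DomSet (D : Finset V) : Prop :=
  ∀ v, v ∉ D → 2 ≤ (G.neighborFinset v ∩ D).card

/-- The 2-domination number `γ₂(G)`. -/
noncomputable def gamma2 : ℕ :=
  sInf {k | ∃ D : Finset V, Is2DomSet G D ∧ D.card = k}

/-- An Italian dominating function: `f : V → {0,1,2}` such that every
vertex of weight `0` has total weight at least `2` on its neighbourhood. -/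
def IsIDF (f : V → ℕ) : Prop :=
  (∀ v, f v ≤ 2) ∧ ∀ v, f v = 0 → 2 ≤ ∑ u ∈ G.neighborFinset v, f u

/-- The Italian domination number `γ_I(G)`. -/
noncomputable def italian : ℕ :=
  sInf {k | ∃ f : V → ℕ, IsIDF G f ∧ ∑ v, f v = k}

/-- `σ(G)`: the number of vertices adjacent to at least two leaves. -/
def sigmaSupp : ℕ :=
  (univ.filter fun v => 2 ≤ ((G.neighborFinset v).filter fun u => G.degree u = 1).card).card

/-- The independence number `α(G)`. -/
noncomputable def indepNum : ℕ :=
  sSup {k | ∃ S : Finset V, (∀ u ∈ S, ∀ w ∈ S, u ≠ w → ¬ G.Adj u w) ∧ S.card = k}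

/-- The vertex cover number `β(G)`. -/
noncomputable def vcNum : ℕ :=
  sInf {k | ∃ S : Finset V, (∀ u v, G.Adj u v → u ∈ S ∨ v ∈ S) ∧ S.card = k}

/-- A semitotal dominating set: a dominating set in which every vertex is
within distance two of another vertex of the set. -/
def IsSemitotalDomSet (D : Finset V) : Prop :=
  IsDomSet G D ∧ ∀ v ∈ D, ∃ u ∈ D, u ≠ v ∧ (G.Adj v u ∨ ∃ w, G.Adj v w ∧ G.Adj w u)

/-- The semitotal domination number `γ_{t2}(G)`. -/
noncomputable def gammaT2 : ℕ :=
  sInf {k | ∃ D : Finset V, IsSemitotalDomSet G D ∧ D.card = k}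

set_option linter.unusedSectionVars false

namespace StrongDifferentialAux
open SimpleGraph


variable {V : Type*} [Fintype V] [DecidableEq V] {T : SimpleGraph V} [DecidableRel T.Adj]

/-- Reachability inside a vertex subset `S`. -/
def reachS (T : SimpleGraph V) (S : Finset V) (ρ x : V) : Prop :=
  ∃ w : T.Walk ρ x, ∀ y ∈ w.support, y ∈ S

/-- The unique path between two vertices of a tree. -/
noncomputable def pth (htree : T.IsTree) (ρ x : V) : T.Walk ρ x :=
  (htree.existsUnique_path ρ x).exists.choose

lemma pth_isPath (htree : T.IsTree) (ρ x : V) : (pth htree ρ x).IsPath :=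
  (htree.existsUnique_path ρ x).exists.choose_spec

lemma pth_unique (htree : T.IsTree) {ρ x : V} (q : T.Walk ρ x) (hq : q.IsPath) :
    q = pth htree ρ x := by
  obtain ⟨p, hp, hup⟩ := htree.existsUnique_path ρ x
  rw [hup q hq, hup _ (pth_isPath htree ρ x)]

/-- Depth of a vertex w.r.t. a root. -/
noncomputable def dep (htree : T.IsTree) (ρ x : V) : ℕ := (pth htree ρ x).length

lemma dep_self (htree : T.IsTree) (ρ : V) : dep htree ρ ρ = 0 := by
  have := pth_unique htree (Walk.nil : T.Walk ρ ρ) (Walk.IsPath.nil)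
  simp [dep, ← this]

lemma eq_root_of_dep_eq_zero (htree : T.IsTree) {ρ x : V} (h : dep htree ρ x = 0) : x = ρ :=
  (Walk.eq_of_length_eq_zero h).symm

lemma pth_support_subset (htree : T.IsTree) {S : Finset V} {ρ x : V}
    (hreach : reachS T S ρ x) : ∀ y ∈ (pth htree ρ x).support, y ∈ S := by
  obtain ⟨w, hw⟩ := hreach
  have hbp : w.bypass = pth htree ρ x := pth_unique htree w.bypass w.bypass_isPath
  intro y hy
  rw [← hbp] at hy
  exact hw y (w.support_bypass_subset hy)

lemma reach_of_mem_support (htree : T.IsTree) {S : Finset V} {ρ x : V}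
    (hreach : reachS T S ρ x) {y : V} (hy : y ∈ (pth htree ρ x).support) :
    reachS T S ρ y := by
  refine ⟨(pth htree ρ x).takeUntil y hy, fun z hz => ?_⟩
  exact pth_support_subset htree hreach z ((pth htree ρ x).support_takeUntil_subset hy hz)

lemma dep_le_of_mem_support (htree : T.IsTree) {ρ x : V} {y : V}
    (hy : y ∈ (pth htree ρ x).support) : dep htree ρ y ≤ dep htree ρ x := by
  have hq : ((pth htree ρ x).takeUntil y hy).IsPath := (pth_isPath htree ρ x).takeUntil hy
  have := pth_unique htree _ hq
  have hlen := congrArg Walk.length ((pth htree ρ x).take_spec hy)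
  rw [Walk.length_append] at hlen
  simp only [dep, ← this]
  omega

lemma reach_start (S : Finset V) {ρ : V} (hρ : ρ ∈ S) : reachS T S ρ ρ :=
  ⟨Walk.nil, by simp [hρ]⟩

lemma reach_adj (htree : T.IsTree) {S : Finset V} {ρ x y : V} (hreach : reachS T S ρ x)
    (hy : y ∈ S) (hadj : T.Adj x y) : reachS T S ρ y := by
  obtain ⟨w, hw⟩ := hreach
  refine ⟨w.concat hadj, fun z hz => ?_⟩
  rw [Walk.support_concat] at hz
  have hz' : z ∈ w.support ∨ z = y := by simpa using hz
  rcases hz' with h | h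
  · exact hw z h
  · rwa [h]

lemma reach_mem (S : Finset V) {ρ x : V} (h : reachS T S ρ x) : x ∈ S := by
  obtain ⟨w, hw⟩ := h
  exact hw x w.end_mem_support

/-- Adjacent vertices in a tree have depths differing by one, and the structure
of the corresponding paths is controlled. -/
lemma dep_adj (htree : T.IsTree) {ρ x y : V} (hadj : T.Adj x y) :
    (dep htree ρ y = dep htree ρ x + 1 ∧ pth htree ρ y = (pth htree ρ x).concat hadj)
    ∨ dep htree ρ x = dep htree ρ y + 1 := by
  by_cases hy : y ∈ (pth htree ρ x).support
  · right
    -- split the path at y; the tail is the unique y-x path, a single edge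
    have htake : ((pth htree ρ x).takeUntil y hy).IsPath := (pth_isPath htree ρ x).takeUntil hy
    have hdrop : ((pth htree ρ x).dropUntil y hy).IsPath := (pth_isPath htree ρ x).dropUntil hy
    have hsingle : (Walk.cons (T.adj_symm hadj) Walk.nil : T.Walk y x).IsPath := by
      simp [Walk.cons_isPath_iff, hadj.ne']
    have huniq : ∀ (p q : T.Walk y x), p.IsPath → q.IsPath → p = q := by
      intro p q hp hq
      have := isAcyclic_iff_path_unique.1 htree.IsAcyclic (p := ⟨p, hp⟩) (q := ⟨q, hq⟩)
      simpa using congrArg Subtype.val this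
    have hdeq : (pth htree ρ x).dropUntil y hy = Walk.cons (T.adj_symm hadj) Walk.nil :=
      huniq _ _ hdrop hsingle
    have htequ : (pth htree ρ x).takeUntil y hy = pth htree ρ y := pth_unique htree _ htake
    have hlen := congrArg Walk.length ((pth htree ρ x).take_spec hy)
    rw [Walk.length_append, hdeq, htequ] at hlen
    simp only [dep]
    simp at hlen
    omega
  · left
    have hconcat : ((pth htree ρ x).concat hadj).IsPath := by
      rw [← Walk.isPath_reverse_iff, Walk.reverse_concat]
      refine Walk.IsPath.cons ((pth_isPath htree ρ x).reverse) ?_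
      rw [Walk.support_reverse]
      simpa using hy
    have heq := pth_unique htree _ hconcat
    refine ⟨?_, heq.symm⟩
    simp only [dep, ← heq, Walk.length_concat]

lemma exists_parent (htree : T.IsTree) {S : Finset V} {ρ x : V} (hreach : reachS T S ρ x)
    (hne : x ≠ ρ) :
    ∃ p, T.Adj p x ∧ reachS T S ρ p ∧ dep htree ρ x = dep htree ρ p + 1 ∧
      ∀ y, T.Adj y x → dep htree ρ x = dep htree ρ y + 1 → y = p := by
  obtain ⟨w1, hadj, q, hq⟩ := Walk.exists_eq_cons_of_ne hne (pth htree ρ x).reverse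
  have hw1mem : w1 ∈ (pth htree ρ x).support := by
    have h1 : w1 ∈ (pth htree ρ x).reverse.support := by
      rw [hq, Walk.support_cons]
      exact List.mem_cons_of_mem _ q.start_mem_support
    rwa [Walk.support_reverse, List.mem_reverse] at h1
  have hw1reach : reachS T S ρ w1 := reach_of_mem_support htree hreach hw1mem
  have hw1le : dep htree ρ w1 ≤ dep htree ρ x := dep_le_of_mem_support htree hw1mem
  have hdep : dep htree ρ x = dep htree ρ w1 + 1 := by
    rcases dep_adj (ρ := ρ) htree hadj with ⟨h1, -⟩ | h2
    · omega
    · exact h2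
  refine ⟨w1, hadj.symm, hw1reach, hdep, ?_⟩
  intro y hyadj hydep
  -- both y and w1 yield concat decompositions of the unique path to x
  have hy' : pth htree ρ x = (pth htree ρ y).concat hyadj := by
    rcases dep_adj (ρ := ρ) htree hyadj with ⟨-, h⟩ | h2
    · exact h
    · omega
  have hw' : pth htree ρ x = (pth htree ρ w1).concat hadj.symm := by
    rcases dep_adj (ρ := ρ) htree hadj.symm with ⟨-, h⟩ | h2
    · exact h
    · omega
  have := Walk.concat_inj (hy'.symm.trans hw')
  exact this.1

/-- Neighbourhood inside `S`. -/
def Nb (T : SimpleGraph V) [DecidableRel T.Adj] (S : Finset V) (v : V) : Finset V :=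
  S.filter (fun u => T.Adj v u)

lemma mem_Nb {S : Finset V} {v u : V} : u ∈ Nb T S v ↔ u ∈ S ∧ T.Adj v u := by
  simp [Nb]

/-- Pendant one-valued neighbours. -/
def pend (T : SimpleGraph V) [DecidableRel T.Adj] (S : Finset V) (f : V → ℕ) (u : V) :
    Finset V :=
  (Nb T S u).filter (fun c => f c = 1 ∧ Nb T S c = {u})

/-- Configuration II : a vertex of value 1 with at most one neighbour, all of value 1. -/
def ConfigII (T : SimpleGraph V) [DecidableRel T.Adj] (S : Finset V) (f : V → ℕ) : Prop :=
  ∃ ℓ ∈ S, f ℓ = 1 ∧ (Nb T S ℓ).card ≤ 1 ∧ ∀ u ∈ Nb T S ℓ, f u = 1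

/-- Configuration III : a zero vertex with two pendant ones. -/
def ConfigIII (T : SimpleGraph V) [DecidableRel T.Adj] (S : Finset V) (f : V → ℕ) : Prop :=
  ∃ u ∈ S, f u = 0 ∧ 2 ≤ (pend T S f u).card

theorem structureLemma (htree : T.IsTree) (S : Finset V) (f : V → ℕ)
    (hcap : ∀ v ∈ S, f v ≤ 1)
    (hone : ∀ v ∈ S, f v = 0 → 2 ≤ ((Nb T S v).filter (fun u => f u = 1)).card)
    (hNoII : ¬ ConfigII T S f) (hNoIII : ¬ ConfigIII T S f)
    {ρ : V} (hρS : ρ ∈ S) (hρ0 : f ρ = 0) :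
    ∃ v ∈ S, f v = 1 ∧ ∃ x ∈ S, T.Adj v x ∧ ((Nb T S v).erase x).Nonempty ∧
      ∀ z ∈ (Nb T S v).erase x, f z = 0 ∧
        ∃ c ∈ S, Nb T S z = {v, c} ∧ f c = 1 ∧ Nb T S c = {z} := by
  classical
  set R : Finset V := S.filter (fun x => reachS T S ρ x) with hR
  have hρR : ρ ∈ R := mem_filter.2 ⟨hρS, reach_start S hρS⟩
  obtain ⟨ℓ, hℓR, hℓmax⟩ := Finset.exists_max_image R (dep htree ρ) ⟨ρ, hρR⟩
  have hreach : ∀ x ∈ R, reachS T S ρ x := fun x hx => (mem_filter.1 hx).2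
  have hRS : ∀ x ∈ R, x ∈ S := fun x hx => (mem_filter.1 hx).1
  have hNbR : ∀ x ∈ R, ∀ u ∈ Nb T S x, u ∈ R := by
    intro x hx u hu
    obtain ⟨huS, hadj⟩ := mem_Nb.1 hu
    exact mem_filter.2 ⟨huS, reach_adj htree (hreach x hx) huS hadj⟩
  have hdepρ : dep htree ρ ρ = 0 := dep_self htree ρ
  -- a non-root vertex of maximal depth has exactly one neighbour, its parent
  have claimTop : ∀ y ∈ R, dep htree ρ y = dep htree ρ ℓ → y ≠ ρ →
      ∃ q ∈ R, Nb T S y = {q} ∧ dep htree ρ y = dep htree ρ q + 1 := by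
    intro y hyR hymax hyne
    obtain ⟨q, hqadj, hqreach, hqdep, hquniq⟩ := exists_parent htree (hreach y hyR) hyne
    have hqR : q ∈ R := mem_filter.2 ⟨reach_mem S hqreach, hqreach⟩
    have hqNb : q ∈ Nb T S y := mem_Nb.2 ⟨hRS q hqR, hqadj.symm⟩
    refine ⟨q, hqR, ?_, hqdep⟩
    apply Finset.eq_singleton_iff_unique_mem.2
    refine ⟨hqNb, fun b hb => ?_⟩
    obtain ⟨hbS, hbadj⟩ := mem_Nb.1 hb
    have hbR : b ∈ R := hNbR y hyR b hb
    rcases dep_adj (ρ := ρ) htree hbadj with ⟨h1, -⟩ | h2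
    · exfalso
      have := hℓmax b hbR
      omega
    · exact hquniq b hbadj.symm h2
  -- moreover such a vertex has value one, so it is a pendant one of its parent
  have claimPend : ∀ y ∈ R, dep htree ρ y = dep htree ρ ℓ → y ≠ ρ →
      ∃ q ∈ R, f y = 1 ∧ Nb T S y = {q} ∧ dep htree ρ y = dep htree ρ q + 1 ∧
        y ∈ pend T S f q := by
    intro y hyR hymax hyne
    obtain ⟨q, hqR, hqNb, hqdep⟩ := claimTop y hyR hymax hyne
    have hfy : f y = 1 := by
      by_contra hne1
      have hy0 : f y = 0 := by
        have := hcap y (hRS y hyR)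
        omega
      have h2 := hone y (hRS y hyR) hy0
      have : ((Nb T S y).filter (fun u => f u = 1)).card ≤ 1 := by
        calc ((Nb T S y).filter (fun u => f u = 1)).card ≤ (Nb T S y).card :=
            Finset.card_le_card (Finset.filter_subset _ _)
          _ = 1 := by rw [hqNb]; simp
      omega
    have hyq : y ∈ Nb T S q := by
      have hqy : q ∈ Nb T S y := by rw [hqNb]; simp
      exact mem_Nb.2 ⟨hRS y hyR, (mem_Nb.1 hqy).2.symm⟩
    exact ⟨q, hqR, hfy, hqNb, hqdep, mem_filter.2 ⟨hyq, hfy, hqNb⟩⟩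
  -- the maximal depth is at least 1
  have hdepℓ : 1 ≤ dep htree ρ ℓ := by
    have h2 := hone ρ hρS hρ0
    have hNbne : ((Nb T S ρ).filter (fun u => f u = 1)).Nonempty := by
      apply Finset.card_pos.1; omega
    obtain ⟨u, hu⟩ := hNbne
    have huNb : u ∈ Nb T S ρ := Finset.mem_of_mem_filter u hu
    have huR : u ∈ R := hNbR ρ hρR u huNb
    have huadj : T.Adj ρ u := (mem_Nb.1 huNb).2
    rcases dep_adj (ρ := ρ) htree huadj with ⟨h1, -⟩ | h2'
    · have := hℓmax u huR; omega
    · omega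
  have hℓne : ℓ ≠ ρ := by
    intro h; rw [h, hdepρ] at hdepℓ; omega
  -- p := the parent of ℓ: a zero vertex
  obtain ⟨p, hpR, hfℓ, hNbℓ, hdepp, hℓpend⟩ := claimPend ℓ hℓR rfl hℓne
  have hpS : p ∈ S := hRS p hpR
  have hℓS : ℓ ∈ S := hRS ℓ hℓR
  have hfp : f p = 0 := by
    by_contra hne
    have hfp1 : f p = 1 := by have := hcap p hpS; omega
    apply hNoII
    refine ⟨ℓ, hℓS, hfℓ, by rw [hNbℓ]; simp, ?_⟩
    intro u hu
    rw [hNbℓ, Finset.mem_singleton] at hu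
    rw [hu]; exact hfp1
  -- all maximal-depth neighbours of a vertex at depth (dep ℓ - 1) are its pendant ones
  have claimChild : ∀ w ∈ R, dep htree ρ ℓ = dep htree ρ w + 1 →
      ∀ u ∈ Nb T S w, dep htree ρ u = dep htree ρ w + 1 → u ∈ pend T S f w := by
    intro w hwR hwdep u huNb hudep
    have huR : u ∈ R := hNbR w hwR u huNb
    have hune : u ≠ ρ := by
      intro h; rw [h, hdepρ] at hudep; omega
    obtain ⟨q, hqR, hfu, hNbu, hqdep, hupend⟩ := claimPend u huR (by omega) hune
    have hwNbu : w ∈ Nb T S u := mem_Nb.2 ⟨hRS w hwR, (mem_Nb.1 huNb).2.symm⟩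
    have hqw : q = w := by
      rw [hNbu, Finset.mem_singleton] at hwNbu
      exact hwNbu.symm
    rwa [hqw] at hupend
  -- p is not the root
  have hpne : p ≠ ρ := by
    intro hpρ
    apply hNoIII
    refine ⟨p, hpS, hfp, ?_⟩
    have hsub : (Nb T S p).filter (fun u => f u = 1) ⊆ pend T S f p := by
      intro u hu
      have huNb : u ∈ Nb T S p := Finset.mem_of_mem_filter u hu
      have huR : u ∈ R := hNbR p hpR u huNb
      have hudep : dep htree ρ u = dep htree ρ p + 1 := by
        rcases dep_adj (ρ := ρ) htree (mem_Nb.1 huNb).2 with ⟨h1, -⟩ | h2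
        · omega
        · exfalso; rw [hpρ, hdepρ] at h2; omega
      exact claimChild p hpR (by omega) u huNb (by omega)
    calc 2 ≤ ((Nb T S p).filter (fun u => f u = 1)).card := hone p hpS hfp
      _ ≤ (pend T S f p).card := Finset.card_le_card hsub
  -- v := the parent of p: a one vertex
  obtain ⟨v, hvadj, hvreach, hvdep, hvuniq⟩ := exists_parent htree (hreach p hpR) hpne
  have hvR : v ∈ R := mem_filter.2 ⟨reach_mem S hvreach, hvreach⟩
  have hvS : v ∈ S := hRS v hvR
  have hNbp_sub : Nb T S p ⊆ insert v (pend T S f p) := by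
    intro u huNb
    have huR : u ∈ R := hNbR p hpR u huNb
    rcases dep_adj (ρ := ρ) htree (mem_Nb.1 huNb).2 with ⟨h1, -⟩ | h2
    · exact Finset.mem_insert.2 (Or.inr (claimChild p hpR (by omega) u huNb (by omega)))
    · exact Finset.mem_insert.2 (Or.inl (hvuniq u (mem_Nb.1 huNb).2.symm h2))
  have hpendp : (pend T S f p).card ≤ 1 := by
    by_contra h
    exact hNoIII ⟨p, hpS, hfp, by omega⟩
  have hfv : f v = 1 := by
    by_contra hne
    have hfv0 : f v = 0 := by have := hcap v hvS; omega
    -- then the ones around p live in pend p, of which there are at most 1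
    have h2 := hone p hpS hfp
    have hsub : (Nb T S p).filter (fun u => f u = 1) ⊆ pend T S f p := by
      intro u hu
      have huNb := Finset.mem_of_mem_filter u hu
      have hu1 := (Finset.mem_filter.1 hu).2
      rcases Finset.mem_insert.1 (hNbp_sub huNb) with h | h
      · exfalso; rw [h] at hu1; omega
      · exact h
    have := Finset.card_le_card hsub
    omega
  have hvne : v ≠ ρ := by
    intro h; rw [h] at hfv; omega
  -- x := the parent of v
  obtain ⟨x, hxadj, hxreach, hxdep, hxuniq⟩ := exists_parent htree hvreach hvne
  have hxR : x ∈ R := mem_filter.2 ⟨reach_mem S hxreach, hxreach⟩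
  have hxS : x ∈ S := hRS x hxR
  refine ⟨v, hvS, hfv, x, hxS, hxadj.symm, ?_, ?_⟩
  · -- p belongs to (Nb v).erase x
    refine ⟨p, Finset.mem_erase.2 ⟨?_, mem_Nb.2 ⟨hpS, hvadj⟩⟩⟩
    intro h
    rw [h] at hvdep
    omega
  · intro z hz
    obtain ⟨hzx, hzNb⟩ := Finset.mem_erase.1 hz
    have hzR : z ∈ R := hNbR v hvR z hzNb
    have hzS : z ∈ S := hRS z hzR
    have hzadj : T.Adj v z := (mem_Nb.1 hzNb).2
    have hzdep : dep htree ρ z = dep htree ρ v + 1 := by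
      rcases dep_adj (ρ := ρ) htree hzadj with ⟨h1, -⟩ | h2
      · omega
      · exfalso; exact hzx (hxuniq z hzadj.symm h2)
    have hzne : z ≠ ρ := by
      intro h; rw [h, hdepρ] at hzdep; omega
    -- v is the unique parent of z
    obtain ⟨pz, hpzadj, hpzreach, hpzdep, hpzuniq⟩ := exists_parent htree (hreach z hzR) hzne
    have hpzv : v = pz := hpzuniq v hzadj (by omega)
    -- the other neighbours of z are pendant ones of z
    have hNbz_sub : Nb T S z ⊆ insert v (pend T S f z) := by
      intro u huNb
      have huR : u ∈ R := hNbR z hzR u huNb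
      rcases dep_adj (ρ := ρ) htree (mem_Nb.1 huNb).2 with ⟨h1, -⟩ | h2
      · refine Finset.mem_insert.2 (Or.inr ?_)
        exact claimChild z hzR (by omega) u huNb (by omega)
      · refine Finset.mem_insert.2 (Or.inl ?_)
        rw [hpzv]
        exact hpzuniq u (mem_Nb.1 huNb).2.symm h2
    have hvNbz : v ∈ Nb T S z := mem_Nb.2 ⟨hvS, hzadj.symm⟩
    have hpendz : (pend T S f z).card ≤ 1 := by
      by_contra h
      push_neg at h
      by_cases hfz : f z = 0
      · exact hNoIII ⟨z, hzS, hfz, by omega⟩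
      · -- f z = 1 : a pendant one of z gives Config II
        have hfz1 : f z = 1 := by have := hcap z hzS; omega
        obtain ⟨c, hc⟩ : (pend T S f z).Nonempty := Finset.card_pos.1 (by omega)
        obtain ⟨hcNb, hfc, hNbc⟩ := Finset.mem_filter.1 hc
        apply hNoII
        refine ⟨c, (mem_Nb.1 hcNb).1, hfc, by rw [hNbc]; simp, ?_⟩
        intro u hu
        rw [hNbc, Finset.mem_singleton] at hu
        rw [hu]; exact hfz1
      -- (unreachable)
    have hfz : f z = 0 := by
      by_contra hne
      have hfz1 : f z = 1 := by have := hcap z hzS; omega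
      apply hNoII
      by_cases hzc : (pend T S f z).Nonempty
      · obtain ⟨c, hc⟩ := hzc
        obtain ⟨hcNb, hfc, hNbc⟩ := Finset.mem_filter.1 hc
        refine ⟨c, (mem_Nb.1 hcNb).1, hfc, by rw [hNbc]; simp, ?_⟩
        intro u hu
        rw [hNbc, Finset.mem_singleton] at hu
        rw [hu]; exact hfz1
      · -- z itself : Nb z = {v}
        have hNbz : Nb T S z = {v} := by
          apply Finset.eq_singleton_iff_unique_mem.2
          refine ⟨hvNbz, fun b hb => ?_⟩
          rcases Finset.mem_insert.1 (hNbz_sub hb) with h | h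
          · exact h
          · exact absurd ⟨b, h⟩ hzc
        refine ⟨z, hzS, hfz1, by rw [hNbz]; simp, ?_⟩
        intro u hu
        rw [hNbz, Finset.mem_singleton] at hu
        rw [hu]; exact hfv
    refine ⟨hfz, ?_⟩
    -- Nb z has exactly the elements v and one pendant c
    have h2 := hone z hzS hfz
    have hcne : (pend T S f z).Nonempty := by
      by_contra hem
      have hNbz : Nb T S z = {v} := by
        apply Finset.eq_singleton_iff_unique_mem.2
        refine ⟨hvNbz, fun b hb => ?_⟩
        rcases Finset.mem_insert.1 (hNbz_sub hb) with h | h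
        · exact h
        · exact absurd ⟨b, h⟩ hem
      have : ((Nb T S z).filter (fun u => f u = 1)).card ≤ 1 := by
        calc ((Nb T S z).filter (fun u => f u = 1)).card ≤ (Nb T S z).card :=
            Finset.card_le_card (Finset.filter_subset _ _)
          _ = 1 := by rw [hNbz]; simp
      omega
    obtain ⟨c, hc⟩ := hcne
    have hpendz_eq : pend T S f z = {c} := by
      apply Finset.eq_singleton_iff_unique_mem.2
      refine ⟨hc, fun b hb => ?_⟩
      by_contra hbc
      have : 2 ≤ (pend T S f z).card := Finset.one_lt_card.2 ⟨b, hb, c, hc, hbc⟩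
      omega
    obtain ⟨hcNb, hfc, hNbc⟩ := Finset.mem_filter.1 hc
    have hcS : c ∈ S := (mem_Nb.1 hcNb).1
    have hNbz_eq : Nb T S z = {v, c} := by
      apply Finset.Subset.antisymm
      · intro b hb
        rcases Finset.mem_insert.1 (hNbz_sub hb) with h | h
        · simp [h]
        · rw [hpendz_eq, Finset.mem_singleton] at h
          simp [h]
      · intro b hb
        rcases Finset.mem_insert.1 hb with h | h
        · rw [h]; exact hvNbz
        · rw [Finset.mem_singleton.1 h]; exact hcNb
    exact ⟨c, hcS, hNbz_eq, hfc, hNbc⟩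

/-- Shrinking the ambient set does not affect neighbourhood sums when the
removed neighbours have value zero. -/
lemma sum_nbr_shrink (S W : Finset V) (hWS : W ⊆ S) (f : V → ℕ) (u : V)
    (hok : ∀ w ∈ W, T.Adj u w → f w = 0) :
    ∑ a ∈ S.filter (fun a => T.Adj u a), f a
      = ∑ a ∈ (S \ W).filter (fun a => T.Adj u a), f a := by
  have hsub : (S \ W).filter (fun a => T.Adj u a) ⊆ S.filter (fun a => T.Adj u a) := by
    intro a ha
    obtain ⟨haSW, hadj⟩ := mem_filter.1 ha
    exact mem_filter.2 ⟨(Finset.mem_sdiff.1 haSW).1, hadj⟩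
  rw [← Finset.sum_sdiff hsub]
  have hzero : ∑ a ∈ (S.filter (fun a => T.Adj u a)) \ ((S \ W).filter (fun a => T.Adj u a)),
      f a = 0 := by
    apply Finset.sum_eq_zero
    intro a ha
    obtain ⟨ha1, ha2⟩ := Finset.mem_sdiff.1 ha
    obtain ⟨haS, hadj⟩ := mem_filter.1 ha1
    have haW : a ∈ W := by
      by_contra haW
      exact ha2 (mem_filter.2 ⟨Finset.mem_sdiff.2 ⟨haS, haW⟩, hadj⟩)
    exact hok a haW hadj
  omega

/-- Two one-valued neighbours give neighbourhood sum at least 2. -/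
lemma two_ones_le_sum (S : Finset V) (f : V → ℕ) (u : V) (A : Finset V)
    (hA : A ⊆ S.filter (fun a => T.Adj u a)) (hA1 : ∀ a ∈ A, f a = 1) (hA2 : 2 ≤ A.card) :
    2 ≤ ∑ a ∈ S.filter (fun a => T.Adj u a), f a := by
  calc (2:ℕ) ≤ A.card := hA2
    _ = ∑ a ∈ A, f a := by
        rw [Finset.sum_congr rfl hA1]; simp
    _ ≤ ∑ a ∈ S.filter (fun a => T.Adj u a), f a := Finset.sum_le_sum_of_subset hA

/-- The conclusion predicate of the key lemma. -/
def Good (T : SimpleGraph V) [DecidableRel T.Adj] (S : Finset V) (f g : V → ℕ) : Prop :=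
  (∀ v, v ∉ S → g v = 0) ∧ (∀ v ∈ S, g v ≤ 2) ∧
  (∀ v ∈ S, g v = 0 → ∃ u ∈ S, T.Adj v u ∧ g u = 2) ∧
  3 * ∑ v ∈ S, g v ≤ 4 * ∑ v ∈ S, f v

lemma keyP2 {N : ℕ}
    (IH : ∀ (S₂ : Finset V) (f₂ : V → ℕ), S₂.card ≤ N →
      (∀ v ∈ S₂, f₂ v ≤ 2) →
      (∀ v ∈ S₂, f₂ v = 0 → 2 ≤ ∑ u ∈ S₂.filter (fun u => T.Adj v u), f₂ u) →
      ∃ g, Good T S₂ f₂ g)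
    (S' : Finset V) (f : V → ℕ) (hcard : S'.card ≤ N)
    (hcap : ∀ v ∈ S', f v ≤ 2)
    (hIt : ∀ v ∈ S', f v = 0 → 2 ≤ ∑ u ∈ S'.filter (fun u => T.Adj v u), f u)
    (t : V) (htS : t ∈ S') (hft : f t = 1) :
    ∃ g : V → ℕ, (∀ v, v ∉ S' → g v = 0) ∧ (∀ v ∈ S', g v ≤ 2) ∧
      (∀ v ∈ S', g v = 0 → ∃ u ∈ S', T.Adj v u ∧ g u = 2) ∧ g t = 2 ∧
      3 * ∑ v ∈ S', g v ≤ 4 * ∑ v ∈ S', f v + 2 := by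
  classical
  set Wz := (S'.filter (fun a => T.Adj t a)).filter (fun u => f u = 0) with hWz
  set W := insert t Wz with hWdef
  have hWzS : Wz ⊆ S' := fun w hw =>
    (mem_filter.1 (Finset.mem_of_mem_filter w hw)).1
  have hWS : W ⊆ S' := by
    intro w hw
    rcases Finset.mem_insert.1 hw with h | h
    · rw [h]; exact htS
    · exact hWzS h
  have htWz : t ∉ Wz := by
    intro h
    have := (mem_filter.1 h).2
    omega
  set S'' := S' \ W with hS''
  have hS''sub : S'' ⊆ S' := Finset.sdiff_subset
  have hcard'' : S''.card ≤ N := le_trans (Finset.card_le_card hS''sub) hcard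
  have hnW : ∀ v ∈ S'', v ∉ W := fun v hv => (Finset.mem_sdiff.1 hv).2
  have hIt'' : ∀ v ∈ S'', f v = 0 → 2 ≤ ∑ u ∈ S''.filter (fun u => T.Adj v u), f u := by
    intro u hu hu0
    have hok : ∀ w ∈ W, T.Adj u w → f w = 0 := by
      intro w hw hadj
      rcases Finset.mem_insert.1 hw with h | h
      · exfalso
        subst h
        have : u ∈ Wz := by
          refine mem_filter.2 ⟨mem_filter.2 ⟨hS''sub hu, hadj.symm⟩, hu0⟩
        exact hnW u hu (Finset.mem_insert.2 (Or.inr this))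
      · exact (mem_filter.1 h).2
    have heq := sum_nbr_shrink S' W hWS f u hok
    have h2 := hIt u (hS''sub hu) hu0
    show 2 ≤ ∑ u' ∈ (S' \ W).filter (fun u' => T.Adj u u'), f u'
    omega
  obtain ⟨g'', hg''0, hg''2, hg''R, hg''w⟩ :=
    IH S'' f hcard'' (fun v hv => hcap v (hS''sub hv)) hIt''
  set g : V → ℕ := fun w => if w ∈ W then (if w = t then 2 else 0) else g'' w with hg
  have hgW : ∀ w ∈ W, g w = if w = t then 2 else 0 := fun w hw => by simp [hg, hw]
  have hgS'' : ∀ w, w ∉ W → g w = g'' w := fun w hw => by simp [hg, hw]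
  have hgt : g t = 2 := by
    rw [hgW t (Finset.mem_insert_self _ _)]; simp
  refine ⟨g, ?_, ?_, ?_, hgt, ?_⟩
  · intro v hv
    have hvW : v ∉ W := fun h => hv (hWS h)
    rw [hgS'' v hvW]
    exact hg''0 v (fun h => hv (hS''sub h))
  · intro v hv
    by_cases hvW : v ∈ W
    · rw [hgW v hvW]; split_ifs <;> omega
    · rw [hgS'' v hvW]
      exact hg''2 v (Finset.mem_sdiff.2 ⟨hv, hvW⟩)
  · intro v hv hv0
    by_cases hvW : v ∈ W
    · rcases Finset.mem_insert.1 hvW with h | h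
      · exfalso
        rw [hgW v hvW, if_pos h] at hv0
        omega
      · -- v is a zero neighbour of t
        refine ⟨t, htS, ?_, hgt⟩
        exact ((mem_filter.1 (Finset.mem_of_mem_filter v h)).2).symm
    · rw [hgS'' v hvW] at hv0
      obtain ⟨u, huS'', hadj, hu2⟩ := hg''R v (Finset.mem_sdiff.2 ⟨hv, hvW⟩) hv0
      exact ⟨u, hS''sub huS'', hadj, by rw [hgS'' u (hnW u huS'')]; exact hu2⟩
  · -- weights
    have hsplitg : ∑ v ∈ S', g v = ∑ v ∈ S'', g v + ∑ v ∈ W, g v :=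
      (Finset.sum_sdiff hWS).symm
    have hsplitf : ∑ v ∈ S', f v = ∑ v ∈ S'', f v + ∑ v ∈ W, f v :=
      (Finset.sum_sdiff hWS).symm
    have hgsum'' : ∑ v ∈ S'', g v = ∑ v ∈ S'', g'' v :=
      Finset.sum_congr rfl (fun v hv => hgS'' v (hnW v hv))
    have hgsumW : ∑ v ∈ W, g v = 2 := by
      have h1 : ∑ v ∈ W, g v = ∑ v ∈ W, (if v = t then 2 else 0) :=
        Finset.sum_congr rfl hgW
      have h2 : ∑ v ∈ W, (if v = t then (2:ℕ) else 0) = 2 := by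
        rw [hWdef, Finset.sum_insert htWz]
        have h3 : ∑ w ∈ Wz, (if w = t then (2:ℕ) else 0) = 0 :=
          Finset.sum_eq_zero (fun w hw => by
            have hne : w ≠ t := fun h => htWz (h ▸ hw)
            simp [hne])
        rw [h3, if_pos rfl]
      rw [h1, h2]
    have hfsumW : ∑ v ∈ W, f v = 1 := by
      rw [hWdef, Finset.sum_insert htWz, hft]
      have h3 : ∑ w ∈ Wz, f w = 0 :=
        Finset.sum_eq_zero (fun w hw => (mem_filter.1 hw).2)
      rw [h3]
    have hg''w' := hg''w
    calc 3 * ∑ v ∈ S', g v = 3 * (∑ v ∈ S'', g'' v) + 6 := by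
          rw [hsplitg, hgsum'', hgsumW]; ring
      _ ≤ 4 * (∑ v ∈ S'', f v) + 6 := by omega
      _ = 4 * ∑ v ∈ S', f v + 2 := by rw [hsplitf, hfsumW]; ring

/-- Gluing a scheme on a removed set `W` with a solution on `S \ W`. -/
lemma glue (S W : Finset V) (hWS : W ⊆ S) (f σ g'' : V → ℕ)
    (hg''0 : ∀ v, v ∉ S \ W → g'' v = 0) (hg''2 : ∀ v ∈ S \ W, g'' v ≤ 2)
    (hg''R : ∀ v ∈ S \ W, g'' v = 0 → ∃ u ∈ S \ W, T.Adj v u ∧ g'' u = 2)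
    (hσ2 : ∀ w ∈ W, σ w ≤ 2)
    (hcov : ∀ w ∈ W, σ w = 0 →
      (∃ u ∈ W, T.Adj w u ∧ σ u = 2) ∨ (∃ u ∈ S \ W, T.Adj w u ∧ g'' u = 2)) :
    ∃ g : V → ℕ, (∀ v, v ∉ S → g v = 0) ∧ (∀ v ∈ S, g v ≤ 2) ∧
      (∀ v ∈ S, g v = 0 → ∃ u ∈ S, T.Adj v u ∧ g u = 2) ∧
      ∑ v ∈ S, g v = ∑ v ∈ S \ W, g'' v + ∑ w ∈ W, σ w := by
  classical
  set g : V → ℕ := fun v => if v ∈ W then σ v else g'' v with hg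
  have hgW : ∀ w ∈ W, g w = σ w := fun w hw => by simp [hg, hw]
  have hgnW : ∀ w, w ∉ W → g w = g'' w := fun w hw => by simp [hg, hw]
  refine ⟨g, ?_, ?_, ?_, ?_⟩
  · intro v hv
    have hvW : v ∉ W := fun h => hv (hWS h)
    rw [hgnW v hvW]
    exact hg''0 v (fun h => hv ((Finset.mem_sdiff.1 h).1))
  · intro v hv
    by_cases hvW : v ∈ W
    · rw [hgW v hvW]; exact hσ2 v hvW
    · rw [hgnW v hvW]; exact hg''2 v (Finset.mem_sdiff.2 ⟨hv, hvW⟩)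
  · intro v hv hv0
    by_cases hvW : v ∈ W
    · rw [hgW v hvW] at hv0
      rcases hcov v hvW hv0 with ⟨u, huW, hadj, hu2⟩ | ⟨u, huSW, hadj, hu2⟩
      · exact ⟨u, hWS huW, hadj, by rw [hgW u huW]; exact hu2⟩
      · refine ⟨u, (Finset.mem_sdiff.1 huSW).1, hadj, ?_⟩
        rw [hgnW u (Finset.mem_sdiff.1 huSW).2]; exact hu2
    · rw [hgnW v hvW] at hv0
      obtain ⟨u, huSW, hadj, hu2⟩ := hg''R v (Finset.mem_sdiff.2 ⟨hv, hvW⟩) hv0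
      refine ⟨u, (Finset.mem_sdiff.1 huSW).1, hadj, ?_⟩
      rw [hgnW u (Finset.mem_sdiff.1 huSW).2]; exact hu2
  · have hsplit : ∑ v ∈ S, g v = ∑ v ∈ S \ W, g v + ∑ w ∈ W, g w :=
      (Finset.sum_sdiff hWS).symm
    have h1 : ∑ v ∈ S \ W, g v = ∑ v ∈ S \ W, g'' v :=
      Finset.sum_congr rfl (fun v hv => hgnW v (Finset.mem_sdiff.1 hv).2)
    have h2 : ∑ w ∈ W, g w = ∑ w ∈ W, σ w := Finset.sum_congr rfl hgW
    rw [hsplit, h1, h2]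

theorem keyAux (htree : T.IsTree) : ∀ (N : ℕ) (S : Finset V) (f : V → ℕ), S.card ≤ N →
    (∀ v ∈ S, f v ≤ 2) →
    (∀ v ∈ S, f v = 0 → 2 ≤ ∑ u ∈ S.filter (fun u => T.Adj v u), f u) →
    ∃ g, Good T S f g := by
  intro N
  induction N with
  | zero =>
    intro S f hcard _ _
    have hS : S = ∅ := Finset.card_eq_zero.1 (le_antisymm hcard (Nat.zero_le _))
    subst hS
    exact ⟨fun _ => 0, fun v _ => rfl, by simp, by simp, by simp⟩
  | succ N IH =>
    intro S f hcard hcap hIt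
    by_cases h2 : ∃ v ∈ S, f v = 2
    · -- Case PEEL : remove a vertex of value 2 together with its zero neighbours
      obtain ⟨v₂, hv₂S, hv₂f⟩ := h2
      set W := insert v₂ ((Nb T S v₂).filter (fun u => f u = 0)) with hW
      have hWS : W ⊆ S := by
        intro w hw
        rcases Finset.mem_insert.1 hw with h | h
        · rw [h]; exact hv₂S
        · exact (mem_Nb.1 (Finset.mem_of_mem_filter w h)).1
      have hv₂W : v₂ ∉ (Nb T S v₂).filter (fun u => f u = 0) := by
        intro h
        have := (mem_Nb.1 (Finset.mem_of_mem_filter v₂ h)).2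
        exact this.ne rfl
      have hcard' : (S \ W).card ≤ N := by
        have h1 : (S \ W).card = S.card - W.card := Finset.card_sdiff_of_subset hWS
        have h2 : 1 ≤ W.card := Finset.card_pos.2 ⟨v₂, Finset.mem_insert_self _ _⟩
        omega
      have hIt' : ∀ u ∈ S \ W, f u = 0 → 2 ≤ ∑ a ∈ (S \ W).filter (fun a => T.Adj u a), f a := by
        intro u hu hu0
        have hok : ∀ w ∈ W, T.Adj u w → f w = 0 := by
          intro w hw hadj
          rcases Finset.mem_insert.1 hw with h | h
          · exfalso
            subst h
            have : u ∈ W := Finset.mem_insert.2 (Or.inr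
              (mem_filter.2 ⟨mem_Nb.2 ⟨(Finset.mem_sdiff.1 hu).1, hadj.symm⟩, hu0⟩))
            exact (Finset.mem_sdiff.1 hu).2 this
          · exact (mem_filter.1 h).2
        have heq := sum_nbr_shrink S W hWS f u hok
        have h3 := hIt u (Finset.mem_sdiff.1 hu).1 hu0
        omega
      obtain ⟨g'', hg''0, hg''2, hg''R, hg''w⟩ :=
        IH (S \ W) f hcard' (fun a ha => hcap a (Finset.mem_sdiff.1 ha).1) hIt'
      set σ : V → ℕ := fun w => if w = v₂ then 2 else 0 with hσ
      obtain ⟨g, hgP0, hgP2, hgPR, hgsum⟩ := glue S W hWS f σ g'' hg''0 hg''2 hg''R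
        (fun w _ => by simp only [hσ]; split_ifs <;> omega)
        (by
          intro w hwW hw0
          left
          refine ⟨v₂, Finset.mem_insert_self _ _, ?_, by simp [hσ]⟩
          have hwz : w ∈ (Nb T S v₂).filter (fun u => f u = 0) := by
            rcases Finset.mem_insert.1 hwW with h | h
            · exfalso; rw [hσ] at hw0; simp [h] at hw0
            · exact h
          exact (mem_Nb.1 (Finset.mem_of_mem_filter w hwz)).2.symm)
      refine ⟨g, hgP0, hgP2, hgPR, ?_⟩
      have hfW : ∑ w ∈ W, f w = 2 := by
        rw [hW, Finset.sum_insert hv₂W, hv₂f]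
        have h3 : ∑ w ∈ (Nb T S v₂).filter (fun u => f u = 0), f w = 0 :=
          Finset.sum_eq_zero (fun w hw => (mem_filter.1 hw).2)
        rw [h3]
      have hσW : ∑ w ∈ W, σ w = 2 := by
        rw [hW, Finset.sum_insert hv₂W]
        have h3 : ∑ w ∈ (Nb T S v₂).filter (fun u => f u = 0), σ w = 0 := by
          apply Finset.sum_eq_zero
          intro w hw
          have hne : w ≠ v₂ := fun h => hv₂W (h ▸ hw)
          simp [hσ, hne]
        rw [h3, hσ]; simp
      have hfsplit : ∑ a ∈ S, f a = ∑ a ∈ S \ W, f a + ∑ w ∈ W, f w :=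
        (Finset.sum_sdiff hWS).symm
      rw [hgsum, hσW, hfsplit, hfW]
      omega
    · push_neg at h2
      have hcap1 : ∀ v ∈ S, f v ≤ 1 := by
        intro v hv
        have := hcap v hv
        have := h2 v hv
        omega
      by_cases hz : ∃ v ∈ S, f v = 0
      swap
      · -- no zeros : take g = f on S
        push_neg at hz
        refine ⟨fun v => if v ∈ S then f v else 0, fun v hv => by simp [hv], ?_, ?_, ?_⟩
        · intro v hv; simp only [if_pos hv]; exact hcap v hv
        · intro v hv hv0
          exfalso
          have hv0' : (if v ∈ S then f v else 0) = 0 := hv0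
          rw [if_pos hv] at hv0'
          exact hz v hv hv0' 
        · have : ∑ v ∈ S, (if v ∈ S then f v else 0) = ∑ v ∈ S, f v :=
            Finset.sum_congr rfl (fun v hv => if_pos hv)
          rw [this]
          omega
      obtain ⟨ρ, hρS, hρ0⟩ := hz
      have honeCard : ∀ v ∈ S, f v = 0 → 2 ≤ ((Nb T S v).filter (fun u => f u = 1)).card := by
        intro v hv hv0
        have hsum := hIt v hv hv0
        have hsplit := Finset.sum_filter_add_sum_filter_not (Nb T S v) (fun u => f u = 1) f
        have hzero : ∑ u ∈ (Nb T S v).filter (fun u => ¬ f u = 1), f u = 0 :=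
          Finset.sum_eq_zero (fun a ha => by
            have h1 := (mem_filter.1 ha).2
            have h2 := hcap1 a (mem_Nb.1 (Finset.mem_of_mem_filter a ha)).1
            omega)
        have hones : ∑ u ∈ (Nb T S v).filter (fun u => f u = 1), f u
            = ((Nb T S v).filter (fun u => f u = 1)).card := by
          rw [Finset.sum_congr rfl (fun a ha => (mem_filter.1 ha).2)]
          simp
        have hNb : ∑ u ∈ S.filter (fun u => T.Adj v u), f u = ∑ u ∈ Nb T S v, f u := rfl
        omega
      by_cases hII : ConfigII T S f
      · -- Case II : pendant one with one-valued neighbourhood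
        obtain ⟨ℓ, hℓS, hfℓ, hNbcard, hNbones⟩ := hII
        set W : Finset V := {ℓ} with hW
        have hWS : W ⊆ S := by
          intro w hw; rw [Finset.mem_singleton.1 hw]; exact hℓS
        have hcard' : (S \ W).card ≤ N := by
          have h1 : (S \ W).card = S.card - W.card := Finset.card_sdiff_of_subset hWS
          have hcW : W.card = 1 := by rw [hW]; simp
          omega
        have hIt' : ∀ u ∈ S \ W, f u = 0 →
            2 ≤ ∑ a ∈ (S \ W).filter (fun a => T.Adj u a), f a := by
          intro u hu hu0
          have hok : ∀ w ∈ W, T.Adj u w → f w = 0 := by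
            intro w hw hadj
            rw [Finset.mem_singleton.1 hw] at hadj ⊢
            exfalso
            have huNb : u ∈ Nb T S ℓ :=
              mem_Nb.2 ⟨(Finset.mem_sdiff.1 hu).1, hadj.symm⟩
            have := hNbones u huNb
            omega
          have heq := sum_nbr_shrink S W hWS f u hok
          have h3 := hIt u (Finset.mem_sdiff.1 hu).1 hu0
          omega
        obtain ⟨g'', hg''0, hg''2, hg''R, hg''w⟩ :=
          IH (S \ W) f hcard' (fun a ha => hcap a (Finset.mem_sdiff.1 ha).1) hIt'
        obtain ⟨g, hgP0, hgP2, hgPR, hgsum⟩ := glue S W hWS f (fun _ => 1) g''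
          hg''0 hg''2 hg''R (fun w _ => by norm_num)
          (fun w _ hw0 => by simp at hw0)
        refine ⟨g, hgP0, hgP2, hgPR, ?_⟩
        have hfsplit : ∑ a ∈ S, f a = ∑ a ∈ S \ W, f a + ∑ w ∈ W, f w :=
          (Finset.sum_sdiff hWS).symm
        have hfW : ∑ w ∈ W, f w = 1 := by rw [hW]; simp [hfℓ]
        have hσW : ∑ w ∈ W, (fun (_ : V) => (1:ℕ)) w = 1 := by rw [hW]; simp
        rw [hgsum, hσW, hfsplit, hfW]
        omega
      by_cases hIII : ConfigIII T S f
      · -- Case III : zero vertex with two pendant ones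
        obtain ⟨u₀, hu₀S, hfu₀, hpcard⟩ := hIII
        set P := pend T S f u₀ with hP
        set W := insert u₀ P with hW
        have hPS : P ⊆ S := fun c hc => (mem_Nb.1 (Finset.mem_of_mem_filter c hc)).1
        have hWS : W ⊆ S := by
          intro w hw
          rcases Finset.mem_insert.1 hw with h | h
          · rw [h]; exact hu₀S
          · exact hPS h
        have hu₀P : u₀ ∉ P := by
          intro h
          have := (mem_Nb.1 (Finset.mem_of_mem_filter u₀ h)).2
          exact this.ne rfl
        have hcard' : (S \ W).card ≤ N := by
          have h1 : (S \ W).card = S.card - W.card := Finset.card_sdiff_of_subset hWS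
          have h2 : 1 ≤ W.card := Finset.card_pos.2 ⟨u₀, Finset.mem_insert_self _ _⟩
          omega
        have hIt' : ∀ u ∈ S \ W, f u = 0 →
            2 ≤ ∑ a ∈ (S \ W).filter (fun a => T.Adj u a), f a := by
          intro u hu hu0
          have hok : ∀ w ∈ W, T.Adj u w → f w = 0 := by
            intro w hw hadj
            rcases Finset.mem_insert.1 hw with h | h
            · rw [h]; exact hfu₀
            · exfalso
              obtain ⟨hwNb, hwf, hwNbc⟩ := mem_filter.1 h
              have huNb : u ∈ Nb T S w :=
                mem_Nb.2 ⟨(Finset.mem_sdiff.1 hu).1, hadj.symm⟩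
              rw [hwNbc, Finset.mem_singleton] at huNb
              exact (Finset.mem_sdiff.1 hu).2 (huNb ▸ Finset.mem_insert_self u₀ P)
          have heq := sum_nbr_shrink S W hWS f u hok
          have h3 := hIt u (Finset.mem_sdiff.1 hu).1 hu0
          omega
        obtain ⟨g'', hg''0, hg''2, hg''R, hg''w⟩ :=
          IH (S \ W) f hcard' (fun a ha => hcap a (Finset.mem_sdiff.1 ha).1) hIt'
        set σ : V → ℕ := fun w => if w = u₀ then 2 else 0 with hσ
        obtain ⟨g, hgP0, hgP2, hgPR, hgsum⟩ := glue S W hWS f σ g''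
          hg''0 hg''2 hg''R (fun w _ => by simp only [hσ]; split_ifs <;> omega)
          (by
            intro w hwW hw0
            left
            refine ⟨u₀, Finset.mem_insert_self _ _, ?_, by simp [hσ]⟩
            have hwP : w ∈ P := by
              rcases Finset.mem_insert.1 hwW with h | h
              · exfalso; rw [hσ] at hw0; simp [h] at hw0
              · exact h
            exact (mem_Nb.1 (Finset.mem_of_mem_filter w hwP)).2.symm)
        refine ⟨g, hgP0, hgP2, hgPR, ?_⟩
        have hfsplit : ∑ a ∈ S, f a = ∑ a ∈ S \ W, f a + ∑ w ∈ W, f w :=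
          (Finset.sum_sdiff hWS).symm
        have hfW : ∑ w ∈ W, f w = P.card := by
          rw [hW, Finset.sum_insert hu₀P, hfu₀]
          have hsum : ∑ w ∈ P, f w = P.card := by
            rw [Finset.sum_congr rfl (fun c hc => (mem_filter.1 hc).2.1)]
            simp
          omega
        have hσW : ∑ w ∈ W, σ w = 2 := by
          rw [hW, Finset.sum_insert hu₀P]
          have h3 : ∑ w ∈ P, σ w = 0 := by
            apply Finset.sum_eq_zero
            intro w hw
            have hne : w ≠ u₀ := fun h => hu₀P (h ▸ hw)
            simp [hσ, hne]
          rw [h3, hσ]; simp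
        rw [hgsum, hσW, hfsplit, hfW]
        omega
      -- Case IV : apply the structure lemma
      obtain ⟨v, hvS, hfv, x, hxS, hadjvx, hZne, hZprop⟩ :=
        structureLemma htree S f hcap1 honeCard hII hIII hρS hρ0
      set Z := (Nb T S v).erase x with hZdef
      have hxNbv : x ∈ Nb T S v := mem_Nb.2 ⟨hxS, hadjvx⟩
      have hNbv : Nb T S v = insert x Z := by
        rw [hZdef]; exact (Finset.insert_erase hxNbv).symm
      have hchoice : ∀ z ∈ Z, ∃ c, c ∈ S ∧ Nb T S z = {v, c} ∧ f c = 1 ∧ Nb T S c = {z} := by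
        intro z hz
        obtain ⟨c, hcS, h1, h2, h3⟩ := (hZprop z hz).2
        exact ⟨c, hcS, h1, h2, h3⟩
      choose! cz hcz using hchoice
      have hczS : ∀ z ∈ Z, cz z ∈ S := fun z hz => (hcz z hz).1
      have hczNbz : ∀ z ∈ Z, Nb T S z = {v, cz z} := fun z hz => (hcz z hz).2.1
      have hczf : ∀ z ∈ Z, f (cz z) = 1 := fun z hz => (hcz z hz).2.2.1
      have hczNbc : ∀ z ∈ Z, Nb T S (cz z) = {z} := fun z hz => (hcz z hz).2.2.2
      have hzf : ∀ z ∈ Z, f z = 0 := fun z hz => (hZprop z hz).1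
      have hzS : ∀ z ∈ Z, z ∈ S := fun z hz => (mem_Nb.1 (Finset.mem_of_mem_erase hz)).1
      have hzadj : ∀ z ∈ Z, T.Adj v z := fun z hz => (mem_Nb.1 (Finset.mem_of_mem_erase hz)).2
      have hczadj : ∀ z ∈ Z, T.Adj z (cz z) := by
        intro z hz
        have hmem : cz z ∈ Nb T S z := by rw [hczNbz z hz]; simp
        exact (mem_Nb.1 hmem).2
      have hvx : v ≠ x := hadjvx.ne
      have hvZ : v ∉ Z := fun h => (hzadj v h).ne rfl
      have hczv : ∀ z ∈ Z, cz z ≠ v := by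
        intro z hz h
        have hNbveq : Nb T S v = {z} := by rw [← h]; exact hczNbc z hz
        have hzx : z ≠ x := (Finset.mem_erase.1 hz).1
        have hx' : x ∈ ({z} : Finset V) := hNbveq ▸ hxNbv
        exact hzx (Finset.mem_singleton.1 hx').symm
      have hczZ : ∀ z ∈ Z, cz z ∉ Z := by
        intro z hz h
        have h1 := hzf (cz z) h
        have h2 := hczf z hz
        omega
      have hinj : Set.InjOn cz Z := by
        intro z1 h1 z2 h2 he
        have e1 := hczNbc z1 h1
        have e2 := hczNbc z2 h2
        rw [he, e2] at e1
        exact (Finset.singleton_injective e1).symm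
      set C := Z.image cz with hC
      have hCcard : C.card = Z.card := Finset.card_image_of_injOn hinj
      have hCmem : ∀ c ∈ C, ∃ z ∈ Z, cz z = c := by
        intro c hc
        obtain ⟨z, hz, he⟩ := Finset.mem_image.1 hc
        exact ⟨z, hz, he⟩
      have hCf : ∀ c ∈ C, f c = 1 := by
        intro c hc
        obtain ⟨z, hz, he⟩ := hCmem c hc
        rw [← he]; exact hczf z hz
      have hCS : ∀ c ∈ C, c ∈ S := by
        intro c hc
        obtain ⟨z, hz, he⟩ := hCmem c hc
        rw [← he]; exact hczS z hz
      have hvC : v ∉ C := fun h => by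
        obtain ⟨z, hz, he⟩ := hCmem v h
        exact hczv z hz he
      have hZC : Disjoint Z C := Finset.disjoint_left.2 (fun a haZ haC => by
        obtain ⟨z, hz, he⟩ := hCmem a haC
        exact hczZ z hz (he ▸ haZ))
      have hadjVonly : ∀ u ∈ S, T.Adj u v → u = x ∨ u ∈ Z := by
        intro u huS hadj
        have hmem : u ∈ Nb T S v := mem_Nb.2 ⟨huS, hadj.symm⟩
        rw [hNbv] at hmem
        rcases Finset.mem_insert.1 hmem with h | h
        · exact Or.inl h
        · exact Or.inr h
      have hadjZ : ∀ z ∈ Z, ∀ u ∈ S, T.Adj u z → u = v ∨ u = cz z := by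
        intro z hz u huS hadj
        have hmem : u ∈ Nb T S z := mem_Nb.2 ⟨huS, hadj.symm⟩
        rw [hczNbz z hz] at hmem
        rcases Finset.mem_insert.1 hmem with h | h
        · exact Or.inl h
        · exact Or.inr (Finset.mem_singleton.1 h)
      have hadjC : ∀ z ∈ Z, ∀ u ∈ S, T.Adj u (cz z) → u = z := by
        intro z hz u huS hadj
        have hmem : u ∈ Nb T S (cz z) := mem_Nb.2 ⟨huS, hadj.symm⟩
        rw [hczNbc z hz] at hmem
        exact Finset.mem_singleton.1 hmem
      have hxC : x ∉ C := by
        intro h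
        obtain ⟨z, hz, he⟩ := hCmem x h
        have : v = z := hadjC z hz v hvS (he ▸ hadjvx)
        exact hvZ (this ▸ hz)
      have hxZ : x ∉ Z := fun h => (Finset.mem_erase.1 h).1 rfl
      have hZCf : ∑ a ∈ Z ∪ C, f a = C.card := by
        rw [Finset.sum_union hZC]
        have h1 : ∑ a ∈ Z, f a = 0 := Finset.sum_eq_zero hzf
        have h2 : ∑ a ∈ C, f a = C.card := by
          rw [Finset.sum_congr rfl hCf]; simp
        omega
      have hZCS : Z ∪ C ⊆ S := by
        intro a ha
        rcases Finset.mem_union.1 ha with h | h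
        · exact hzS a h
        · exact hCS a h
      -- split according to x
      by_cases hxcase : f x = 0 ∧ ((Nb T S x).filter (fun a => f a = 1)).card ≤ 2
      · -- Case IVβ
        obtain ⟨hfx0, hcle⟩ := hxcase
        have hvOne : v ∈ (Nb T S x).filter (fun a => f a = 1) :=
          mem_filter.2 ⟨mem_Nb.2 ⟨hvS, hadjvx.symm⟩, hfv⟩
        have h2le := honeCard x hxS hfx0
        have htex : (((Nb T S x).filter (fun a => f a = 1)).erase v).Nonempty := by
          rw [← Finset.card_pos, Finset.card_erase_of_mem hvOne]; omega
        obtain ⟨t, ht⟩ := htex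
        have htv : t ≠ v := (Finset.mem_erase.1 ht).1
        have htOne := Finset.mem_of_mem_erase ht
        have htNb := Finset.mem_of_mem_filter t htOne
        have htf : f t = 1 := (mem_filter.1 htOne).2
        have htS : t ∈ S := (mem_Nb.1 htNb).1
        have htadj : T.Adj x t := (mem_Nb.1 htNb).2
        set W := insert x (insert v (Z ∪ C)) with hW
        have hxIn : x ∉ insert v (Z ∪ C) := by
          intro h
          rcases Finset.mem_insert.1 h with h' | h'
          · exact hvx h'.symm
          · rcases Finset.mem_union.1 h' with h'' | h''
            · exact hxZ h''
            · exact hxC h''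
        have hvIn : v ∉ Z ∪ C := by
          intro h
          rcases Finset.mem_union.1 h with h' | h'
          · exact hvZ h'
          · exact hvC h'
        have hWS : W ⊆ S := by
          intro w hw
          rcases Finset.mem_insert.1 hw with h | h
          · rw [h]; exact hxS
          · rcases Finset.mem_insert.1 h with h' | h'
            · rw [h']; exact hvS
            · exact hZCS h'
        have hmemW : ∀ w, w ∈ W ↔ (w = x ∨ w = v ∨ w ∈ Z ∨ w ∈ C) := by
          intro w
          simp [hW, Finset.mem_insert, Finset.mem_union]
        have htW : t ∉ W := by
          rw [hmemW]
          push_neg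
          refine ⟨fun h => by rw [h] at htf; omega, htv, ?_, ?_⟩
          · intro h
            have := hzf t h
            omega
          · intro h
            obtain ⟨z, hz, he⟩ := hCmem t h
            have hxz : x = z := hadjC z hz x hxS (he ▸ htadj)
            exact hxZ (hxz ▸ hz)
        have hcard' : (S \ W).card ≤ N := by
          have h1 : (S \ W).card = S.card - W.card := Finset.card_sdiff_of_subset hWS
          have h2 : 1 ≤ W.card := Finset.card_pos.2 ⟨x, Finset.mem_insert_self _ _⟩
          omega
        have hIt' : ∀ u ∈ S \ W, f u = 0 →
            2 ≤ ∑ a ∈ (S \ W).filter (fun a => T.Adj u a), f a := by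
          intro u hu hu0
          obtain ⟨huS, huW⟩ := Finset.mem_sdiff.1 hu
          have hok : ∀ w ∈ W, T.Adj u w → f w = 0 := by
            intro w hw hadj
            rw [hmemW] at hw
            rcases hw with h | h | h | h
            · rw [h]; exact hfx0
            · exfalso
              rw [h] at hadj
              rcases hadjVonly u huS hadj with h' | h'
              · exact huW (by rw [hmemW]; exact Or.inl h')
              · exact huW (by rw [hmemW]; exact Or.inr (Or.inr (Or.inl h')))
            · exact hzf w h
            · exfalso
              obtain ⟨z, hz, he⟩ := hCmem w h
              have : u = z := hadjC z hz u huS (he ▸ hadj)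
              exact huW (by rw [hmemW]; exact Or.inr (Or.inr (Or.inl (this ▸ hz))))
          have heq := sum_nbr_shrink S W hWS f u hok
          have h3 := hIt u huS hu0
          omega
        have hfW : ∑ w ∈ W, f w = C.card + 1 := by
          rw [hW, Finset.sum_insert hxIn, Finset.sum_insert hvIn, hZCf, hfx0, hfv]
          omega
        have hfsplit : ∑ a ∈ S, f a = ∑ a ∈ S \ W, f a + ∑ w ∈ W, f w :=
          (Finset.sum_sdiff hWS).symm
        by_cases hm : 2 ≤ Z.card
        · -- m ≥ 2 : no mark needed
          obtain ⟨g'', hg''0, hg''2, hg''R, hg''w⟩ :=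
            IH (S \ W) f hcard' (fun a ha => hcap a (Finset.mem_sdiff.1 ha).1) hIt'
          set σ : V → ℕ := fun w => if w = v then 2 else if w ∈ C then 1 else 0 with hσ
          have hσv : σ v = 2 := by simp [hσ]
          have hσz : ∀ z ∈ Z, σ z = 0 := by
            intro z hz
            have h1 : z ≠ v := fun h => hvZ (h ▸ hz)
            have h2 : z ∉ C := Finset.disjoint_left.1 hZC hz
            simp [hσ, h1, h2]
          have hσc : ∀ c ∈ C, σ c = 1 := by
            intro c hc
            have h1 : c ≠ v := fun h => hvC (h ▸ hc)
            simp [hσ, h1, hc]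
          have hxv : x ≠ v := fun h => hvx h.symm
          have hσx : σ x = 0 := by
            simp [hσ, hxv, hxC]
          obtain ⟨g, hgP0, hgP2, hgPR, hgsum⟩ := glue S W hWS f σ g''
            hg''0 hg''2 hg''R
            (fun w _ => by simp only [hσ]; split_ifs <;> omega)
            (by
              intro w hwW hw0
              left
              rw [hmemW] at hwW
              have hvW : v ∈ W := by rw [hmemW]; exact Or.inr (Or.inl rfl)
              rcases hwW with h | h | h | h
              · exact ⟨v, hvW, h ▸ hadjvx.symm, hσv⟩
              · rw [h, hσv] at hw0; omega
              · exact ⟨v, hvW, (hzadj w h).symm, hσv⟩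
              · rw [hσc w h] at hw0; omega)
          refine ⟨g, hgP0, hgP2, hgPR, ?_⟩
          have hσW : ∑ w ∈ W, σ w = C.card + 2 := by
            rw [hW, Finset.sum_insert hxIn, Finset.sum_insert hvIn, hσx, hσv,
              Finset.sum_union hZC]
            have h1 : ∑ a ∈ Z, σ a = 0 := Finset.sum_eq_zero hσz
            have h2 : ∑ a ∈ C, σ a = C.card := by
              rw [Finset.sum_congr rfl hσc]; simp
            omega
          rw [hgsum, hσW, hfsplit, hfW]
          have hmC : 2 ≤ C.card := by omega
          omega
        · -- m = 1 : use the forced-vertex corollary at t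
          have hm1 : Z.card = 1 := by
            obtain ⟨z', hz'⟩ := hZne
            have : 1 ≤ Z.card := Finset.card_pos.2 ⟨z', hz'⟩
            omega
          obtain ⟨z₀, hZeq⟩ := Finset.card_eq_one.1 hm1
          have hz₀Z : z₀ ∈ Z := by rw [hZeq]; simp
          have hCeq : C = {cz z₀} := by rw [hC, hZeq]; simp
          obtain ⟨g'', hg''0, hg''2, hg''R, hg''t, hg''w⟩ :=
            keyP2 IH (S \ W) f hcard' (fun a ha => hcap a (Finset.mem_sdiff.1 ha).1) hIt'
              t (Finset.mem_sdiff.2 ⟨htS, htW⟩) htf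
          set σ : V → ℕ := fun w => if w = z₀ then 2 else 0 with hσ
          have hσz₀ : σ z₀ = 2 := by simp [hσ]
          obtain ⟨g, hgP0, hgP2, hgPR, hgsum⟩ := glue S W hWS f σ g''
            hg''0 hg''2 hg''R
            (fun w _ => by simp only [hσ]; split_ifs <;> omega)
            (by
              intro w hwW hw0
              have hz₀W : z₀ ∈ W := by
                rw [hmemW]; exact Or.inr (Or.inr (Or.inl hz₀Z))
              rw [hmemW] at hwW
              rcases hwW with h | h | h | h
              · -- w = x : covered by t outside
                right
                exact ⟨t, Finset.mem_sdiff.2 ⟨htS, htW⟩, h ▸ htadj, hg''t⟩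
              · -- w = v : covered by z₀
                left
                exact ⟨z₀, hz₀W, by rw [h]; exact hzadj z₀ hz₀Z, hσz₀⟩
              · -- w ∈ Z : w = z₀, contradiction with σ w = 0
                exfalso
                rw [hZeq, Finset.mem_singleton] at h
                rw [h, hσz₀] at hw0
                omega
              · -- w ∈ C : w = cz z₀, covered by z₀
                left
                rw [hCeq, Finset.mem_singleton] at h
                exact ⟨z₀, hz₀W, by rw [h]; exact (hczadj z₀ hz₀Z).symm, hσz₀⟩)
          refine ⟨g, hgP0, hgP2, hgPR, ?_⟩
          have hσW : ∑ w ∈ W, σ w = 2 := by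
            rw [hW, Finset.sum_insert hxIn, Finset.sum_insert hvIn, Finset.sum_union hZC]
            have h1 : σ x = 0 := by
              have : x ≠ z₀ := fun h => hxZ (h ▸ hz₀Z)
              simp [hσ, this]
            have h2 : σ v = 0 := by
              have : v ≠ z₀ := fun h => hvZ (h ▸ hz₀Z)
              simp [hσ, this]
            have h3 : ∑ a ∈ Z, σ a = 2 := by
              rw [hZeq]; simp [hσ]
            have h4 : ∑ a ∈ C, σ a = 0 := by
              rw [hCeq]
              have hne : cz z₀ ≠ z₀ := fun h => hczZ z₀ hz₀Z (by rw [h]; exact hz₀Z)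
              have hne' : ¬ z₀ = cz z₀ := fun h => hne h.symm
              simp [hσ, hne, hne']
            omega
          have hCcard1 : C.card = 1 := by rw [hCcard, hm1]
          rw [hgsum, hσW, hfsplit, hfW]
          omega
      · -- Case IVα
        have hα : f x = 1 ∨ (f x = 0 ∧ 3 ≤ ((Nb T S x).filter (fun a => f a = 1)).card) := by
          push_neg at hxcase
          by_cases h : f x = 0
          · right; exact ⟨h, by have := hxcase h; omega⟩
          · left; have := hcap1 x hxS; omega
        set W := insert v (Z ∪ C) with hW
        have hvIn : v ∉ Z ∪ C := by
          intro h
          rcases Finset.mem_union.1 h with h' | h'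
          · exact hvZ h'
          · exact hvC h'
        have hWS : W ⊆ S := by
          intro w hw
          rcases Finset.mem_insert.1 hw with h | h
          · rw [h]; exact hvS
          · exact hZCS h
        have hmemW : ∀ w, w ∈ W ↔ (w = v ∨ w ∈ Z ∨ w ∈ C) := by
          intro w
          simp [hW, Finset.mem_insert, Finset.mem_union]
        have hxW : x ∉ W := by
          rw [hmemW]
          push_neg
          exact ⟨fun h => hvx h.symm, hxZ, hxC⟩
        have hcard' : (S \ W).card ≤ N := by
          have h1 : (S \ W).card = S.card - W.card := Finset.card_sdiff_of_subset hWS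
          have h2 : 1 ≤ W.card := Finset.card_pos.2 ⟨v, Finset.mem_insert_self _ _⟩
          omega
        have hIt' : ∀ u ∈ S \ W, f u = 0 →
            2 ≤ ∑ a ∈ (S \ W).filter (fun a => T.Adj u a), f a := by
          intro u hu hu0
          obtain ⟨huS, huW⟩ := Finset.mem_sdiff.1 hu
          by_cases hux : u = x
          · -- u = x : it has at least three one-neighbours, of which only v is removed
            subst hux
            have hfx0 : f u = 0 := hu0
            have h3le : 3 ≤ ((Nb T S u).filter (fun a => f a = 1)).card := by
              rcases hα with h | ⟨-, h⟩
              · omega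
              · exact h
            have hvOne : v ∈ (Nb T S u).filter (fun a => f a = 1) :=
              mem_filter.2 ⟨mem_Nb.2 ⟨hvS, hadjvx.symm⟩, hfv⟩
            apply two_ones_le_sum (S \ W) f u (((Nb T S u).filter (fun a => f a = 1)).erase v)
            · intro a ha
              obtain ⟨hav, haOne⟩ := Finset.mem_erase.1 ha
              obtain ⟨haNb, haf⟩ := mem_filter.1 haOne
              obtain ⟨haS, haadj⟩ := mem_Nb.1 haNb
              have haW : a ∉ W := by
                rw [hmemW]
                push_neg
                refine ⟨hav, ?_, ?_⟩
                · intro h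
                  have := hzf a h
                  omega
                · intro h
                  obtain ⟨z, hz, he⟩ := hCmem a h
                  have h1 : u = z := hadjC z hz u huS (he ▸ haadj)
                  exact hxZ (h1 ▸ hz)
              exact mem_filter.2 ⟨Finset.mem_sdiff.2 ⟨haS, haW⟩, haadj⟩
            · intro a ha
              exact (mem_filter.1 (Finset.mem_of_mem_erase ha)).2
            · rw [Finset.card_erase_of_mem hvOne]
              omega
          · have hok : ∀ w ∈ W, T.Adj u w → f w = 0 := by
              intro w hw hadj
              rw [hmemW] at hw
              rcases hw with h | h | h
              · exfalso
                rw [h] at hadj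
                rcases hadjVonly u huS hadj with h' | h'
                · exact hux h'
                · exact huW (by rw [hmemW]; exact Or.inr (Or.inl h'))
              · exact hzf w h
              · exfalso
                obtain ⟨z, hz, he⟩ := hCmem w h
                have : u = z := hadjC z hz u huS (he ▸ hadj)
                exact huW (by rw [hmemW]; exact Or.inr (Or.inl (this ▸ hz)))
            have heq := sum_nbr_shrink S W hWS f u hok
            have h3 := hIt u huS hu0
            omega
        obtain ⟨g'', hg''0, hg''2, hg''R, hg''w⟩ :=
          IH (S \ W) f hcard' (fun a ha => hcap a (Finset.mem_sdiff.1 ha).1) hIt'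
        have hfW : ∑ w ∈ W, f w = C.card + 1 := by
          rw [hW, Finset.sum_insert hvIn, hZCf, hfv]
          omega
        have hfsplit : ∑ a ∈ S, f a = ∑ a ∈ S \ W, f a + ∑ w ∈ W, f w :=
          (Finset.sum_sdiff hWS).symm
        by_cases hm : 2 ≤ Z.card
        · set σ : V → ℕ := fun w => if w = v then 2 else if w ∈ C then 1 else 0 with hσ
          have hσv : σ v = 2 := by simp [hσ]
          have hσz : ∀ z ∈ Z, σ z = 0 := by
            intro z hz
            have h1 : z ≠ v := fun h => hvZ (h ▸ hz)
            have h2 : z ∉ C := Finset.disjoint_left.1 hZC hz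
            simp [hσ, h1, h2]
          have hσc : ∀ c ∈ C, σ c = 1 := by
            intro c hc
            have h1 : c ≠ v := fun h => hvC (h ▸ hc)
            simp [hσ, h1, hc]
          obtain ⟨g, hgP0, hgP2, hgPR, hgsum⟩ := glue S W hWS f σ g''
            hg''0 hg''2 hg''R
            (fun w _ => by simp only [hσ]; split_ifs <;> omega)
            (by
              intro w hwW hw0
              left
              have hvW : v ∈ W := Finset.mem_insert_self _ _
              rw [hmemW] at hwW
              rcases hwW with h | h | h
              · rw [h, hσv] at hw0; omega
              · exact ⟨v, hvW, (hzadj w h).symm, hσv⟩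
              · rw [hσc w h] at hw0; omega)
          refine ⟨g, hgP0, hgP2, hgPR, ?_⟩
          have hσW : ∑ w ∈ W, σ w = C.card + 2 := by
            rw [hW, Finset.sum_insert hvIn, hσv, Finset.sum_union hZC]
            have h1 : ∑ a ∈ Z, σ a = 0 := Finset.sum_eq_zero hσz
            have h2 : ∑ a ∈ C, σ a = C.card := by
              rw [Finset.sum_congr rfl hσc]; simp
            omega
          rw [hgsum, hσW, hfsplit, hfW]
          have hmC : 2 ≤ C.card := by omega
          omega
        · have hm1 : Z.card = 1 := by
            obtain ⟨z', hz'⟩ := hZne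
            have : 1 ≤ Z.card := Finset.card_pos.2 ⟨z', hz'⟩
            omega
          obtain ⟨z₀, hZeq⟩ := Finset.card_eq_one.1 hm1
          have hz₀Z : z₀ ∈ Z := by rw [hZeq]; simp
          have hCeq : C = {cz z₀} := by rw [hC, hZeq]; simp
          set σ : V → ℕ := fun w => if w = z₀ then 2 else 0 with hσ
          have hσz₀ : σ z₀ = 2 := by simp [hσ]
          obtain ⟨g, hgP0, hgP2, hgPR, hgsum⟩ := glue S W hWS f σ g''
            hg''0 hg''2 hg''R
            (fun w _ => by simp only [hσ]; split_ifs <;> omega)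
            (by
              intro w hwW hw0
              have hz₀W : z₀ ∈ W := by
                rw [hmemW]; exact Or.inr (Or.inl hz₀Z)
              left
              rw [hmemW] at hwW
              rcases hwW with h | h | h
              · exact ⟨z₀, hz₀W, by rw [h]; exact hzadj z₀ hz₀Z, hσz₀⟩
              · exfalso
                rw [hZeq, Finset.mem_singleton] at h
                rw [h, hσz₀] at hw0
                omega
              · rw [hCeq, Finset.mem_singleton] at h
                exact ⟨z₀, hz₀W, by rw [h]; exact (hczadj z₀ hz₀Z).symm, hσz₀⟩)
          refine ⟨g, hgP0, hgP2, hgPR, ?_⟩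
          have hσW : ∑ w ∈ W, σ w = 2 := by
            rw [hW, Finset.sum_insert hvIn, Finset.sum_union hZC]
            have h2 : σ v = 0 := by
              have : v ≠ z₀ := fun h => hvZ (h ▸ hz₀Z)
              simp [hσ, this]
            have h3 : ∑ a ∈ Z, σ a = 2 := by
              rw [hZeq]; simp [hσ]
            have h4 : ∑ a ∈ C, σ a = 0 := by
              rw [hCeq]
              have hne : cz z₀ ≠ z₀ := fun h => hczZ z₀ hz₀Z (by rw [h]; exact hz₀Z)
              have hne' : ¬ z₀ = cz z₀ := fun h => hne h.symm
              simp [hσ, hne, hne']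
            omega
          have hCcard1 : C.card = 1 := by rw [hCcard, hm1]
          rw [hgsum, hσW, hfsplit, hfW]
          omega

theorem keyFinal (htree : T.IsTree) (S : Finset V) (f : V → ℕ)
    (hcap : ∀ v ∈ S, f v ≤ 2)
    (hIt : ∀ v ∈ S, f v = 0 → 2 ≤ ∑ u ∈ S.filter (fun u => T.Adj v u), f u) :
    ∃ g : V → ℕ,
      (∀ v, v ∉ S → g v = 0) ∧ (∀ v ∈ S, g v ≤ 2) ∧
      (∀ v ∈ S, g v = 0 → ∃ u ∈ S, T.Adj v u ∧ g u = 2) ∧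
      3 * ∑ v ∈ S, g v ≤ 4 * ∑ v ∈ S, f v :=
  keyAux htree S.card S f le_rfl hcap hIt

end StrongDifferentialAux

theorem stmt_14 {V : Type*} [Fintype V] [DecidableEq V] (T : SimpleGraph V)
    [DecidableRel T.Adj] (htree : T.IsTree) :
    4 * sdiff T ≤ (Fintype.card V : ℤ) + 3 * gdiff T := by
  classical
  set n := Fintype.card V with hn
  obtain ⟨D, hDmem, hDeq⟩ := Finset.exists_mem_eq_sup'
    (⟨∅, empty_mem_powerset _⟩ : ((univ : Finset V)).powerset.Nonempty) (sdiffSet T)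
  set W := weak T D with hW
  set E := extNbhd T D with hE
  have hWD : W ⊆ D := filter_subset _ _
  have hEnotD : ∀ u ∈ E, u ∉ D := fun u hu => (mem_filter.1 hu).2.1
  have hWEdisj : Disjoint W E := by
    refine Finset.disjoint_left.2 fun a haW haE => hEnotD a haE (hWD haW)
  set f : V → ℕ := fun v => if v ∈ W then 2 else if v ∈ E then 0 else 1 with hf
  have hf2 : ∀ v ∈ (univ : Finset V), f v ≤ 2 := by
    intro v _
    simp only [hf]
    split_ifs <;> omega
  have hfIt : ∀ v ∈ (univ : Finset V), f v = 0 →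
      2 ≤ ∑ u ∈ (univ : Finset V).filter (fun u => T.Adj v u), f u := by
    intro v _ hv0
    have hvW : v ∉ W := by
      intro h; simp only [hf, if_pos h] at hv0; omega
    have hvE : v ∈ E := by
      by_contra h
      simp only [hf, if_neg hvW, if_neg h] at hv0; omega
    obtain ⟨-, hvD, u, huD, hadj⟩ :
        v ∈ univ ∧ v ∉ D ∧ ∃ u ∈ D, T.Adj v u := by
      have := mem_filter.1 hvE
      exact ⟨this.1, this.2.1, this.2.2⟩
    set Dn := D.filter (fun u => T.Adj v u) with hDn
    have huDn : u ∈ Dn := mem_filter.2 ⟨huD, hadj⟩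
    have hDnsub : Dn ⊆ (univ : Finset V).filter (fun u => T.Adj v u) := by
      intro a ha
      exact mem_filter.2 ⟨mem_univ _, (mem_filter.1 ha).2⟩
    by_cases hcase : ∃ w ∈ Dn, w ∈ W
    · obtain ⟨w, hwDn, hwW⟩ := hcase
      have : f w = 2 := by simp [hf, hwW]
      calc (2 : ℕ) = f w := this.symm
        _ ≤ ∑ u ∈ (univ : Finset V).filter (fun u => T.Adj v u), f u :=
          Finset.single_le_sum (fun i _ => Nat.zero_le _) (hDnsub hwDn)
    · push_neg at hcase
      have hfone : ∀ w ∈ Dn, 1 ≤ f w := by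
        intro w hw
        have hwD : w ∈ D := (mem_filter.1 hw).1
        have hwW : w ∉ W := hcase w hw
        have hwE : w ∉ E := fun h => hEnotD w h hwD
        simp [hf, hwW, hwE]
      have h2 : 2 ≤ Dn.card := by
        by_contra h
        push_neg at h
        have hsing : Dn = {u} := by
          apply Finset.eq_singleton_iff_unique_mem.2
          refine ⟨huDn, fun b hb => ?_⟩
          by_contra hbu
          have : 2 ≤ Dn.card := Finset.one_lt_card.2 ⟨b, hb, u, huDn, hbu⟩
          omega
        have hvepn : v ∈ epn T u D := by
          refine mem_filter.2 ⟨mem_univ _, hvD, ?_⟩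
          have : T.neighborFinset v ∩ D = Dn := by
            ext a
            simp only [Finset.mem_inter, SimpleGraph.mem_neighborFinset, hDn, mem_filter]
            tauto
          rw [this, hsing]
        have : u ∈ W := mem_filter.2 ⟨huD, ⟨v, hvepn⟩⟩
        exact absurd this (hcase u huDn)
      calc (2 : ℕ) ≤ Dn.card := h2
        _ = ∑ w ∈ Dn, 1 := by simp
        _ ≤ ∑ w ∈ Dn, f w := Finset.sum_le_sum hfone
        _ ≤ ∑ u ∈ (univ : Finset V).filter (fun u => T.Adj v u), f u :=
          Finset.sum_le_sum_of_subset hDnsub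
  -- weight of f :  ∑ f + |E| = n + |W|
  have hEsub : E ⊆ univ \ W := fun a ha =>
    Finset.mem_sdiff.2 ⟨mem_univ _, fun h => (Finset.disjoint_left.1 hWEdisj) h ha⟩
  have hsumf : (∑ v, f v) + E.card = n + W.card := by
    have hsplit : ∑ v ∈ (univ : Finset V), f v
        = ∑ v ∈ (univ : Finset V) \ W, f v + ∑ v ∈ W, f v :=
      (Finset.sum_sdiff (subset_univ W)).symm
    have h1 : ∑ v ∈ W, f v = 2 * W.card := by
      have hconst : ∀ v ∈ W, f v = 2 := fun v hv => by simp [hf, hv]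
      rw [Finset.sum_congr rfl hconst, Finset.sum_const, smul_eq_mul, mul_comm]
    have h2 : ∑ v ∈ (univ : Finset V) \ W, f v = ((univ \ W) \ E).card := by
      rw [← Finset.sum_sdiff hEsub]
      have hz : ∑ v ∈ E, f v = 0 := Finset.sum_eq_zero (fun v hv => by
        have hvW : v ∉ W := fun h => (Finset.disjoint_left.1 hWEdisj) h hv
        simp [hf, hvW, hv])
      have ho : ∑ v ∈ ((univ : Finset V) \ W) \ E, f v = (((univ : Finset V) \ W) \ E).card := by
        have hconst : ∀ v ∈ ((univ : Finset V) \ W) \ E, f v = 1 := by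
          intro v hv
          obtain ⟨hv1, hv2⟩ := Finset.mem_sdiff.1 hv
          have hv3 := (Finset.mem_sdiff.1 hv1).2
          simp [hf, hv2, hv3]
        rw [Finset.sum_congr rfl hconst, Finset.sum_const, smul_eq_mul, mul_one]
      rw [hz, ho]; ring
    have hc1 : (((univ : Finset V) \ W) \ E).card = ((univ : Finset V) \ W).card - E.card :=
      Finset.card_sdiff_of_subset hEsub
    have hc2 : ((univ : Finset V) \ W).card = n - W.card :=
      by rw [Finset.card_sdiff_of_subset (subset_univ W)]; rfl
    have hc3 : E.card ≤ ((univ : Finset V) \ W).card := Finset.card_le_card hEsub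
    have hc4 : W.card ≤ n := by
      have := Finset.card_le_card (subset_univ W); simpa using this
    omega
  -- apply the key lemma
  obtain ⟨g, hg0, hg2, hgRoman, hgw⟩ := StrongDifferentialAux.keyFinal htree (univ : Finset V) f hf2 hfIt
  -- the set of vertices with g-value 2
  set D' := (univ : Finset V).filter (fun v => g v = 2) with hD'
  set Z0 := (univ : Finset V).filter (fun v => g v = 0) with hZ0
  have hZ0sub : Z0 ⊆ extNbhd T D' := by
    intro v hv
    have hv0 : g v = 0 := (mem_filter.1 hv).2
    obtain ⟨u, -, hadj, hu2⟩ := hgRoman v (mem_univ v) hv0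
    refine mem_filter.2 ⟨mem_univ _, ?_, u, mem_filter.2 ⟨mem_univ _, hu2⟩, hadj⟩
    intro h
    have := (mem_filter.1 h).2
    omega
  -- ∑ g ≥ |D'| + (n - |Z0|)
  have hsumg : D'.card + n ≤ (∑ v, g v) + Z0.card := by
    set NZ := (univ : Finset V).filter (fun v => g v ≠ 0) with hNZ
    have hD'NZ : D' ⊆ NZ := by
      intro a ha
      have := (mem_filter.1 ha).2
      exact mem_filter.2 ⟨mem_univ _, by omega⟩
    have hsplit : ∑ v ∈ NZ, g v = ∑ v ∈ NZ \ D', g v + ∑ v ∈ D', g v :=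
      (Finset.sum_sdiff hD'NZ).symm
    have hrest : ∑ v ∈ (univ : Finset V) \ NZ, g v = 0 :=
      Finset.sum_eq_zero (fun v hv => by
        have := (Finset.mem_sdiff.1 hv).2
        by_contra hne
        exact this (mem_filter.2 ⟨mem_univ _, hne⟩))
    have htot : ∑ v, g v = ∑ v ∈ NZ, g v := by
      rw [← Finset.sum_sdiff (subset_univ NZ), hrest]; ring
    have h1 : 2 * D'.card ≤ ∑ v ∈ D', g v := by
      have hconst : ∀ v ∈ D', g v = 2 := fun v hv => (mem_filter.1 hv).2
      rw [Finset.sum_congr rfl hconst, Finset.sum_const, smul_eq_mul, mul_comm]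
    have h2 : NZ.card - D'.card ≤ ∑ v ∈ NZ \ D', g v := by
      have hone : ∀ v ∈ NZ \ D', 1 ≤ g v := by
        intro v hv
        have := (mem_filter.1 (Finset.mem_sdiff.1 hv).1).2
        omega
      calc NZ.card - D'.card = (NZ \ D').card := (Finset.card_sdiff_of_subset hD'NZ).symm
        _ = ∑ v ∈ NZ \ D', 1 := by simp
        _ ≤ ∑ v ∈ NZ \ D', g v := Finset.sum_le_sum hone
    have hcZ : Z0.card + NZ.card = n := by
      have hZeq : Z0 = univ \ NZ := by
        ext a
        simp only [hZ0, hNZ, mem_filter, Finset.mem_sdiff, mem_univ, true_and, not_not]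
      rw [hZeq, Finset.card_sdiff_of_subset (subset_univ NZ), card_univ]
      have hle := Finset.card_le_card (subset_univ NZ)
      rw [card_univ] at hle
      rw [hn]
      omega
    have hD'le : D'.card ≤ NZ.card := Finset.card_le_card hD'NZ
    omega
  -- conclude
  have hcard : Z0.card ≤ (extNbhd T D').card := Finset.card_le_card hZ0sub
  have hgd : (n : ℤ) - (∑ v, g v : ℕ) ≤ gdiff T := by
    have hle : diffSet T D' ≤ gdiff T :=
      Finset.le_sup' (diffSet T) (mem_powerset.2 (subset_univ _))
    have h' : (D'.card : ℤ) + n ≤ ((∑ v, g v : ℕ) : ℤ) + Z0.card := by exact_mod_cast hsumg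
    have h2 : (Z0.card : ℤ) ≤ ((extNbhd T D').card : ℤ) := by exact_mod_cast hcard
    have h3 : diffSet T D' = ((extNbhd T D').card : ℤ) - D'.card := rfl
    linarith
  have hkey' : 3 * ((∑ v, g v : ℕ) : ℤ) ≤ 4 * ((∑ v, f v : ℕ) : ℤ) := by exact_mod_cast hgw
  have hfs : ((∑ v, f v : ℕ) : ℤ) + E.card = (n : ℤ) + W.card := by exact_mod_cast hsumf
  have hsd0 : sdiff T = sdiffSet T D := hDeq
  have hsd2 : sdiff T = (n : ℤ) - (∑ v, f v : ℕ) := by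
    rw [hsd0]
    show ((extNbhd T D).card : ℤ) - (weak T D).card = _
    have h1 : ((extNbhd T D).card : ℤ) = (E.card : ℤ) := by rw [← hE]
    have h2 : ((weak T D).card : ℤ) = (W.card : ℤ) := by rw [← hW]
    rw [h1, h2]
    linarith
  rw [hsd2]
  linarith


end StrongDifferential
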